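/- Let a, s be rational numbers with s ≠ 0, s⁴ − 4a ≠ 0, s⁴ + 12a ≠ 0, and 3s⁴ + 4a ≠ 0. Define x = (s⁴ − 4a)² / (2s³(s⁴ + 12a)), y = 2a(3s⁴ + 4a)² / (s³(s⁴ − 4a)(s⁴ + 12a)), and z = s(s⁴ + 12a) / (2(3s⁴ + 4a)). Then xyz(x + y + z) = a. -/

import Mathlib

theorem stmt_6 (a s : ℚ) (hs : s ≠ 0)
    (h1 : s ^ 4 - 4 * a ≠ 0) (h2 : s ^ 4 + 12 * a ≠ 0) (h3 : 3 * s ^ 4 + 4 * a ≠ 0)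
    (x y z : ℚ)
    (hx : x = (s ^ 4 - 4 * a) ^ 2 / (2 * s ^ 3 * (s ^ 4 + 12 * a)))
    (hy : y = 2 * a * (3 * s ^ 4 + 4 * a) ^ 2 / (s ^ 3 * (s ^ 4 - 4 * a) * (s ^ 4 + 12 * a)))
    (hz : z = s * (s ^ 4 + 12 * a) / (2 * (3 * s ^ 4 + 4 * a))) :
    x * y * z * (x + y + z) = a := by
  subst hx hy hz
  have h3' : s ^ 4 * 3 + 4 * a ≠ 0 := by rwa [mul_comm] at h3
  have h2' : s ^ 4 + a * 12 ≠ 0 := by rwa [mul_comm] at h2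
  field_simp
  ring
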